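/- Let p be an odd prime and let λ_1 > λ_2 ≥ 1 be integers. Then pλ_2 ∈ Ψ_p(pλ_1 − pλ_2) if and only if p²λ_2 ∈ Ψ_p(p²λ_1 − p²λ_2). (This is the combinatorial content of Corollary 5.6(a): for a two-part partition λ, H^1(Σ_{pd}, S^{pλ}) ≅ H^1(Σ_{p²d}, S^{p²λ}).) -/

import Mathlib

/-- The `i`-th base-`p` digit of `r`. -/
def pdigit (p r i : ℕ) : ℕ := (r / p ^ i) % p

/-- For a base-`p` digit `a`, `pbar p a = p - 1 - a` is the unique `a̅` with
`0 ≤ a̅ ≤ p - 1` and `a + a̅ ≡ p - 1 (mod p)`. -/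
def pbar (p a : ℕ) : ℕ := p - 1 - a

/-- Erdmann's set `Ψ_p(r)`. -/
def Psi (p r : ℕ) : Set ℕ :=
  {m | ∃ u a : ℕ, 1 ≤ a ∧ pdigit p r u ≠ p - 1 ∧
        m = (∑ i ∈ Finset.range u, pbar p (pdigit p r i) * p ^ i) + p ^ (u + a)} ∪
  {m | ∃ u : ℕ, pdigit p r u ≠ p - 1 ∧
        m = ∑ i ∈ Finset.range (u + 1), pbar p (pdigit p r i) * p ^ i}

lemma sum_mod_key (p N v : ℕ) (hd0 : pdigit p N 0 = 0) (hp3 : 3 ≤ p) :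
    (∑ i ∈ Finset.range (v + 1), pbar p (pdigit p N i) * p ^ i) % p = p - 1 := by
  rw [Finset.sum_range_succ']
  have hdvd : p ∣ ∑ i ∈ Finset.range v, pbar p (pdigit p N (i + 1)) * p ^ (i + 1) := by
    refine Finset.dvd_sum fun i _ => ?_
    exact Dvd.dvd.mul_left (dvd_pow_self p (Nat.succ_ne_zero i)) _
  obtain ⟨k, hk⟩ := hdvd
  rw [hk]
  simp only [hd0, pbar, Nat.sub_zero, pow_zero, mul_one, Nat.mul_add_mod]
  exact Nat.mod_eq_of_lt (by omega)

lemma key (p N m : ℕ) (hp3 : 3 ≤ p) (h0 : N % p = 0) (hdvd : p ∣ m) :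
    m ∈ Psi p N ↔ ∃ a, 1 ≤ a ∧ m = p ^ a := by
  have hd0 : pdigit p N 0 = 0 := by simp [pdigit, h0]
  constructor
  · rintro (⟨u, a, ha, hu, rfl⟩ | ⟨u, hu, rfl⟩)
    · rcases Nat.eq_zero_or_pos u with rfl | hupos
      · exact ⟨a, ha, by simp⟩
      · exfalso
        obtain ⟨v, rfl⟩ : ∃ v, u = v + 1 := ⟨u - 1, by omega⟩
        have hs := sum_mod_key p N v hd0 hp3
        have hppow : p ∣ p ^ (v + 1 + a) := dvd_pow_self p (by omega)
        obtain ⟨k, hk⟩ := hppow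
        obtain ⟨j, hj⟩ := hdvd
        have : (∑ i ∈ Finset.range (v + 1), pbar p (pdigit p N i) * p ^ i) % p
            = (p * j) % p := by rw [← hj, hk, Nat.add_mul_mod_self_left]
        rw [hs, Nat.mul_mod_right] at this
        omega
    · exfalso
      have hs := sum_mod_key p N u hd0 hp3
      obtain ⟨j, hj⟩ := hdvd
      rw [hj, Nat.mul_mod_right] at hs
      omega
  · rintro ⟨a, ha, rfl⟩
    left
    exact ⟨0, a, ha, by rw [hd0]; omega, by simp⟩

theorem mem_Psi_p_iff_p_sq (p l1 l2 : ℕ) (hp : p.Prime) (hodd : Odd p)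
    (h12 : l2 < l1) (h2 : 1 ≤ l2) :
    p * l2 ∈ Psi p (p * l1 - p * l2) ↔ p ^ 2 * l2 ∈ Psi p (p ^ 2 * l1 - p ^ 2 * l2) := by
  have hp3 : 3 ≤ p := by
    have h2 := hp.two_le
    rcases Nat.eq_or_lt_of_le h2 with h | h
    · exact absurd hodd (by rw [← h]; decide)
    · omega
  have hppos : 0 < p := by omega
  have h01 : (p * l1 - p * l2) % p = 0 := by
    have : p ∣ p * l1 - p * l2 := Nat.dvd_sub (dvd_mul_right p l1) (dvd_mul_right p l2)
    omega
  have h02 : (p ^ 2 * l1 - p ^ 2 * l2) % p = 0 := by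
    have : p ∣ p ^ 2 * l1 - p ^ 2 * l2 :=
      Nat.dvd_sub (dvd_mul_of_dvd_left (dvd_pow_self p two_ne_zero) _)
        (dvd_mul_of_dvd_left (dvd_pow_self p two_ne_zero) _)
    omega
  rw [key p _ _ hp3 h01 ⟨l2, rfl⟩, key p _ _ hp3 h02 ⟨p * l2, by ring⟩]
  constructor
  · rintro ⟨a, ha, hpa⟩
    exact ⟨a + 1, by omega, by rw [show p ^ 2 * l2 = p * (p * l2) by ring, hpa, ← pow_succ']⟩
  · rintro ⟨b, hb, hpb⟩
    have hb2 : 2 ≤ b := by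
      by_contra h
      have : b = 1 := by omega
      subst this
      have : p ^ 2 * 1 ≤ p ^ 2 * l2 := Nat.mul_le_mul_left _ h2
      nlinarith [sq_nonneg p]
    refine ⟨b - 1, by omega, ?_⟩
    have : p * (p * l2) = p * p ^ (b - 1) := by
      rw [← mul_assoc, ← sq, hpb, ← pow_succ']
      congr 1
      omega
    exact Nat.eq_of_mul_eq_mul_left hppos this
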